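/- Fix β > 0. Let Γ₀ be a symmetric positive definite d×d matrix. Then the matrix ODE Γ̇_t = −2 Γ_t (I + β Γ_t)^{−1}, Γ(0) = Γ₀, has a unique global solution on [0,∞), Γ_t remains symmetric positive definite for all t, has the same eigenspaces as Γ₀, and each eigenvalue λ_i(t) of Γ_t satisfies λ_i(t) + β^{−1} log λ_i(t) = λ_i(0) + β^{−1} log λ_i(0) − 2t/β. -/

import Mathlib

open Matrix Real Set Filter Topology

noncomputable section

variable {d : ℕ}

/-- The right-hand side of the covariance ODE `Γ̇ = −2 Γ (I + βΓ)⁻¹`. -/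
def covDrift (β : ℝ) (A : Matrix (Fin d) (Fin d) ℝ) : Matrix (Fin d) (Fin d) ℝ :=
  (-2 : ℝ) • (A * (1 + β • A)⁻¹)

/-- A solution of the covariance ODE on `[0,∞)` (entrywise derivatives). -/
def IsCovSolution (β : ℝ) (Γ₀ : Matrix (Fin d) (Fin d) ℝ)
    (Γ : ℝ → Matrix (Fin d) (Fin d) ℝ) : Prop :=
  Γ 0 = Γ₀ ∧ ∀ t ∈ Ici (0 : ℝ), ∀ i j,
    HasDerivWithinAt (fun s => Γ s i j) (covDrift β (Γ t) i j) (Ici (0 : ℝ)) t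

namespace CovOdeAux


/-- `F_β(r) = r + β⁻¹ log r`. -/
def Fb (β r : ℝ) : ℝ := r + β⁻¹ * Real.log r

variable {β : ℝ}

lemma Fb_strictMonoOn (hβ : 0 < β) : StrictMonoOn (Fb β) (Ioi (0:ℝ)) := by
  intro a ha b hb hab
  have hlog := Real.log_lt_log (mem_Ioi.1 ha) hab
  have hβi : 0 < β⁻¹ := inv_pos.2 hβ
  exact add_lt_add hab ((mul_lt_mul_iff_right₀ hβi).2 hlog)

lemma Fb_surj (hβ : 0 < β) (y : ℝ) : ∃ r ∈ Ioi (0:ℝ), Fb β r = y := by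
  set r₁ : ℝ := min 1 (Real.exp (β * (y - 1))) with hr₁def
  have hr₁ : 0 < r₁ := lt_min one_pos (Real.exp_pos _)
  have h₁ : Fb β r₁ ≤ y := by
    have hlog : Real.log r₁ ≤ β * (y - 1) := by
      calc Real.log r₁ ≤ Real.log (Real.exp (β * (y - 1))) :=
            Real.log_le_log hr₁ (min_le_right _ _)
        _ = β * (y - 1) := Real.log_exp _
    have h2 : β⁻¹ * Real.log r₁ ≤ y - 1 := by
      rw [inv_mul_le_iff₀ hβ]; linarith [hlog]
    have hr₁le : r₁ ≤ 1 := min_le_left _ _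
    unfold Fb; linarith
  set r₂ : ℝ := max 1 y with hr₂def
  have h1r₂ : (1:ℝ) ≤ r₂ := le_max_left _ _
  have h₂ : y ≤ Fb β r₂ := by
    have hlog : 0 ≤ Real.log r₂ := Real.log_nonneg h1r₂
    have hy : y ≤ r₂ := le_max_right _ _
    have : 0 ≤ β⁻¹ * Real.log r₂ := mul_nonneg (inv_pos.2 hβ).le hlog
    unfold Fb; linarith
  have hr₁₂ : r₁ ≤ r₂ := le_trans (min_le_left _ _) h1r₂
  have hcont : ContinuousOn (Fb β) (Icc r₁ r₂) := by
    apply ContinuousOn.add continuousOn_id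
    apply ContinuousOn.mul continuousOn_const
    apply Real.continuousOn_log.mono
    intro x hx
    exact ne_of_gt (lt_of_lt_of_le hr₁ hx.1)
  have := intermediate_value_Icc hr₁₂ hcont
  have hy : y ∈ Icc (Fb β r₁) (Fb β r₂) := ⟨h₁, h₂⟩
  obtain ⟨r, hr, hfr⟩ := this hy
  exact ⟨r, lt_of_lt_of_le hr₁ hr.1, hfr⟩

/-- The order isomorphism `(0,∞) ≃o ℝ` given by `F_β`. -/
def gIso (hβ : 0 < β) : Ioi (0:ℝ) ≃o ℝ :=
  StrictMono.orderIsoOfSurjective (fun x => Fb β x.1)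
    (fun a b hab => Fb_strictMonoOn hβ a.2 b.2 hab)
    (fun y => by
      obtain ⟨r, hr, hfr⟩ := Fb_surj hβ y
      exact ⟨⟨r, hr⟩, hfr⟩)

/-- The inverse of `F_β`. -/
def gb (hβ : 0 < β) (y : ℝ) : ℝ := ((gIso hβ).symm y : ℝ)

lemma gb_pos (hβ : 0 < β) (y : ℝ) : 0 < gb hβ y := ((gIso hβ).symm y).2

lemma Fb_gb (hβ : 0 < β) (y : ℝ) : Fb β (gb hβ y) = y := by
  have h := (gIso hβ).apply_symm_apply y
  have h2 : (gIso hβ) ((gIso hβ).symm y) = Fb β (gb hβ y) :=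
    congrFun (StrictMono.coe_orderIsoOfSurjective _ _ _) ((gIso hβ).symm y)
  rw [h2] at h
  exact h

lemma gb_Fb (hβ : 0 < β) {r : ℝ} (hr : 0 < r) : gb hβ (Fb β r) = r := by
  have h1 : (gIso hβ) ⟨r, hr⟩ = Fb β r :=
    congrFun (StrictMono.coe_orderIsoOfSurjective _ _ _) (⟨r, hr⟩ : Ioi (0:ℝ))
  have := (gIso hβ).symm_apply_apply ⟨r, hr⟩
  rw [h1] at this
  simpa [gb] using congrArg Subtype.val this

lemma continuous_gb (hβ : 0 < β) : Continuous (gb hβ) :=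
  continuous_subtype_val.comp (gIso hβ).symm.continuous

lemma hasDerivAt_Fb (hβ : 0 < β) {r : ℝ} (hr : 0 < r) :
    HasDerivAt (Fb β) (1 + β⁻¹ * r⁻¹) r := by
  have h := (hasDerivAt_id r).fun_add ((Real.hasDerivAt_log hr.ne').const_mul β⁻¹)
  exact h

lemma hasDerivAt_gb (hβ : 0 < β) (y : ℝ) :
    HasDerivAt (gb hβ) (1 + β⁻¹ * (gb hβ y)⁻¹)⁻¹ y := by
  have hpos : (0:ℝ) < 1 + β⁻¹ * (gb hβ y)⁻¹ := by
    have := mul_pos (inv_pos.2 hβ) (inv_pos.2 (gb_pos hβ y))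
    linarith
  exact HasDerivAt.of_local_left_inverse (continuous_gb hβ).continuousAt
    (hasDerivAt_Fb hβ (gb_pos hβ y)) hpos.ne'
    (Eventually.of_forall fun z => Fb_gb hβ z)

/-- The eigenvalue flow: `lamF a t` solves `λ̇ = −2λ/(1+βλ)`, `λ(0) = a` (for `a > 0`). -/
def lamF (hβ : 0 < β) (a t : ℝ) : ℝ := gb hβ (Fb β a - 2 * t / β)

lemma lamF_pos (hβ : 0 < β) (a t : ℝ) : 0 < lamF hβ a t := gb_pos hβ _

lemma lamF_zero (hβ : 0 < β) {a : ℝ} (ha : 0 < a) : lamF hβ a 0 = a := by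
  simp [lamF, gb_Fb hβ ha]

lemma lamF_eqn (hβ : 0 < β) (a t : ℝ) :
    lamF hβ a t + β⁻¹ * Real.log (lamF hβ a t) = a + β⁻¹ * Real.log a - 2 * t / β :=
  Fb_gb hβ _

lemma hasDerivAt_lamF (hβ : 0 < β) (a t : ℝ) :
    HasDerivAt (lamF hβ a) (-2 * lamF hβ a t * (1 + β * lamF hβ a t)⁻¹) t := by
  have h1 : HasDerivAt (fun s : ℝ => Fb β a - 2 * s / β) (-(2 / β)) t := by
    have := ((hasDerivAt_id t).const_mul (2:ℝ)).div_const β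
    have h2 := (this.const_sub (Fb β a))
    simpa [mul_one] using h2
  have h2 := (hasDerivAt_gb hβ (Fb β a - 2 * t / β)).comp t h1
  have hr : 0 < lamF hβ a t := lamF_pos hβ a t
  refine HasDerivAt.congr_deriv h2 ?_
  have hβ0 : β ≠ 0 := hβ.ne'
  have hr0 : lamF hβ a t ≠ 0 := hr.ne'
  have h1βr : (0:ℝ) < 1 + β * lamF hβ a t := by nlinarith
  rw [show gb hβ (Fb β a - 2 * t / β) = lamF hβ a t from rfl]
  field_simp
  ring





variable {d : ℕ} {Γ₀ : Matrix (Fin d) (Fin d) ℝ}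

/-- The orthogonal eigenbasis matrix of `Γ₀`. -/
def Ub (hΓ₀ : Γ₀.PosDef) : Matrix (Fin d) (Fin d) ℝ := hΓ₀.1.eigenvectorUnitary

/-- Eigenvalues of `Γ₀`. -/
def ev (hΓ₀ : Γ₀.PosDef) : Fin d → ℝ := hΓ₀.1.eigenvalues

lemma ev_pos (hΓ₀ : Γ₀.PosDef) (i : Fin d) : 0 < ev hΓ₀ i := hΓ₀.eigenvalues_pos i

lemma Ub_mul_star (hΓ₀ : Γ₀.PosDef) : Ub hΓ₀ * star (Ub hΓ₀) = 1 :=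
  Matrix.mem_unitaryGroup_iff.mp (hΓ₀.1.eigenvectorUnitary).2

lemma star_mul_Ub (hΓ₀ : Γ₀.PosDef) : star (Ub hΓ₀) * Ub hΓ₀ = 1 :=
  Matrix.mem_unitaryGroup_iff'.mp (hΓ₀.1.eigenvectorUnitary).2

/-- Conjugation of a diagonal matrix by the eigenbasis of `Γ₀`. -/
def conj (hΓ₀ : Γ₀.PosDef) (w : Fin d → ℝ) : Matrix (Fin d) (Fin d) ℝ :=
  Ub hΓ₀ * diagonal w * star (Ub hΓ₀)

lemma conj_entry (hΓ₀ : Γ₀.PosDef) (w : Fin d → ℝ) (k l : Fin d) :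
    conj hΓ₀ w k l = ∑ i, Ub hΓ₀ k i * Ub hΓ₀ l i * w i := by
  unfold conj
  rw [Matrix.mul_apply]
  refine Finset.sum_congr rfl fun i _ => ?_
  rw [Matrix.mul_diagonal, Matrix.star_apply, star_trivial]
  ring

lemma conj_mul (hΓ₀ : Γ₀.PosDef) (w w' : Fin d → ℝ) :
    conj hΓ₀ w * conj hΓ₀ w' = conj hΓ₀ (fun i => w i * w' i) := by
  unfold conj
  have : Ub hΓ₀ * diagonal w * star (Ub hΓ₀) * (Ub hΓ₀ * diagonal w' * star (Ub hΓ₀))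
      = Ub hΓ₀ * diagonal w * (star (Ub hΓ₀) * Ub hΓ₀) * diagonal w' * star (Ub hΓ₀) := by
    noncomm_ring
  rw [this, star_mul_Ub, mul_one, mul_assoc (Ub hΓ₀), diagonal_mul_diagonal]

lemma conj_one (hΓ₀ : Γ₀.PosDef) : conj hΓ₀ (fun _ => 1) = 1 := by
  unfold conj
  rw [show (diagonal fun _ : Fin d => (1:ℝ)) = 1 from diagonal_one, mul_one, Ub_mul_star]

lemma conj_add (hΓ₀ : Γ₀.PosDef) (w w' : Fin d → ℝ) :
    conj hΓ₀ w + conj hΓ₀ w' = conj hΓ₀ (fun i => w i + w' i) := by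
  unfold conj
  rw [show (diagonal fun i => w i + w' i) = diagonal w + diagonal w' from by
    rw [← diagonal_add]]
  noncomm_ring

lemma conj_smul (hΓ₀ : Γ₀.PosDef) (c : ℝ) (w : Fin d → ℝ) :
    c • conj hΓ₀ w = conj hΓ₀ (fun i => c * w i) := by
  unfold conj
  rw [show (diagonal fun i => c * w i) = c • diagonal w from by
    rw [show (fun i => c * w i) = c • w from rfl, diagonal_smul]]
  rw [Matrix.mul_smul, Matrix.smul_mul]

lemma one_add_smul_conj (hΓ₀ : Γ₀.PosDef) (β : ℝ) (w : Fin d → ℝ) :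
    1 + β • conj hΓ₀ w = conj hΓ₀ (fun i => 1 + β * w i) := by
  rw [← conj_one hΓ₀, conj_smul, conj_add]

lemma conj_inv (hΓ₀ : Γ₀.PosDef) (w : Fin d → ℝ) (hw : ∀ i, w i ≠ 0) :
    (conj hΓ₀ w)⁻¹ = conj hΓ₀ (fun i => (w i)⁻¹) := by
  apply Matrix.inv_eq_right_inv
  rw [conj_mul]
  rw [show (fun i => w i * (w i)⁻¹) = fun _ : Fin d => (1:ℝ) from
    funext fun i => mul_inv_cancel₀ (hw i)]
  exact conj_one hΓ₀

/-- `Γ₀` in diagonalized form. -/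
lemma Γ₀_eq_conj (hΓ₀ : Γ₀.PosDef) : Γ₀ = conj hΓ₀ (ev hΓ₀) := by
  have h := hΓ₀.1.spectral_theorem
  rw [show RCLike.ofReal ∘ hΓ₀.1.eigenvalues = ev hΓ₀ from funext fun i => by
    simp [ev]] at h
  exact h

lemma covDrift_conj {β : ℝ} (hΓ₀ : Γ₀.PosDef) (w : Fin d → ℝ)
    (hw : ∀ i, (0:ℝ) < 1 + β * w i) :
    covDrift β (conj hΓ₀ w) = conj hΓ₀ (fun i => -2 * w i * (1 + β * w i)⁻¹) := by
  unfold covDrift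
  rw [one_add_smul_conj, conj_inv hΓ₀ _ (fun i => (hw i).ne'), conj_mul, conj_smul]
  rw [show (fun i => (-2:ℝ) * (w i * (1 + β * w i)⁻¹)) = fun i => -2 * w i * (1 + β * w i)⁻¹
    from funext fun i => by ring]

lemma conj_posDef (hΓ₀ : Γ₀.PosDef) (w : Fin d → ℝ) (hw : ∀ i, 0 < w i) :
    (conj hΓ₀ w).PosDef := by
  rw [posDef_iff_dotProduct_mulVec]
  constructor
  · -- IsHermitian
    unfold conj Matrix.IsHermitian
    rw [Matrix.star_eq_conjTranspose, conjTranspose_mul, conjTranspose_mul,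
      conjTranspose_conjTranspose, diagonal_conjTranspose,
      show star w = w from star_trivial w, mul_assoc]
  · intro x hx
    have hyx : Ub hΓ₀ *ᵥ (star (Ub hΓ₀) *ᵥ x) = x := by
      rw [mulVec_mulVec, Ub_mul_star, one_mulVec]
    set y := star (Ub hΓ₀) *ᵥ x with hy
    have hyne : y ≠ 0 := by
      intro h0
      exact hx (by rw [← hyx, h0, mulVec_zero])
    have h1 : x ᵥ* Ub hΓ₀ = y := by
      rw [hy, Matrix.star_eq_conjTranspose, conjTranspose_eq_transpose_of_trivial,
        mulVec_transpose]
    have hform : star x ⬝ᵥ (conj hΓ₀ w *ᵥ x) = ∑ i, w i * (y i * y i) := by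
      calc star x ⬝ᵥ (conj hΓ₀ w *ᵥ x)
          = x ⬝ᵥ (Ub hΓ₀ *ᵥ (diagonal w *ᵥ y)) := by
            rw [star_trivial, conj, ← Matrix.mulVec_mulVec, ← Matrix.mulVec_mulVec, ← hy]
        _ = (x ᵥ* Ub hΓ₀) ⬝ᵥ (diagonal w *ᵥ y) := dotProduct_mulVec _ _ _
        _ = y ⬝ᵥ (diagonal w *ᵥ y) := by rw [h1]
        _ = ∑ i, y i * (w i * y i) := by
            simp only [dotProduct, mulVec_diagonal]
        _ = ∑ i, w i * (y i * y i) := Finset.sum_congr rfl fun i _ => by ring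
    rw [hform]
    obtain ⟨i, hi⟩ := Function.ne_iff.mp hyne
    refine Finset.sum_pos' (fun j _ => mul_nonneg (hw j).le (mul_self_nonneg _)) ?_
    exact ⟨i, Finset.mem_univ i, mul_pos (hw i) (mul_self_pos.mpr hi)⟩



section Sol

variable {β : ℝ} {Γ₀ : Matrix (Fin d) (Fin d) ℝ}

/-- The candidate solution. -/
def sol (hβ : 0 < β) (hΓ₀ : Γ₀.PosDef) (t : ℝ) : Matrix (Fin d) (Fin d) ℝ :=
  conj hΓ₀ (fun i => lamF hβ (ev hΓ₀ i) t)

lemma sol_zero (hβ : 0 < β) (hΓ₀ : Γ₀.PosDef) : sol hβ hΓ₀ 0 = Γ₀ := by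
  unfold sol
  rw [show (fun i => lamF hβ (ev hΓ₀ i) 0) = ev hΓ₀ from
    funext fun i => lamF_zero hβ (ev_pos hΓ₀ i)]
  exact (Γ₀_eq_conj hΓ₀).symm

lemma one_add_lam_pos (hβ : 0 < β) {r : ℝ} (hr : 0 < r) : (0:ℝ) < 1 + β * r := by nlinarith

lemma sol_posDef (hβ : 0 < β) (hΓ₀ : Γ₀.PosDef) (t : ℝ) : (sol hβ hΓ₀ t).PosDef :=
  conj_posDef hΓ₀ _ (fun i => lamF_pos hβ _ t)

lemma sol_isSymm (hβ : 0 < β) (hΓ₀ : Γ₀.PosDef) (t : ℝ) : (sol hβ hΓ₀ t).IsSymm := by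
  have h := (sol_posDef hβ hΓ₀ t).1
  rw [Matrix.IsSymm, ← conjTranspose_eq_transpose_of_trivial]
  exact h

lemma covDrift_sol (hβ : 0 < β) (hΓ₀ : Γ₀.PosDef) (t : ℝ) :
    covDrift β (sol hβ hΓ₀ t) = conj hΓ₀
      (fun i => -2 * lamF hβ (ev hΓ₀ i) t * (1 + β * lamF hβ (ev hΓ₀ i) t)⁻¹) :=
  covDrift_conj hΓ₀ _ (fun i => one_add_lam_pos hβ (lamF_pos hβ _ t))

lemma sol_hasDerivAt_entry (hβ : 0 < β) (hΓ₀ : Γ₀.PosDef) (t : ℝ) (k l : Fin d) :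
    HasDerivAt (fun s => sol hβ hΓ₀ s k l) (covDrift β (sol hβ hΓ₀ t) k l) t := by
  have hfun : ∀ s, sol hβ hΓ₀ s k l
      = ∑ i, Ub hΓ₀ k i * Ub hΓ₀ l i * lamF hβ (ev hΓ₀ i) s :=
    fun s => conj_entry hΓ₀ _ k l
  have hval : covDrift β (sol hβ hΓ₀ t) k l
      = ∑ i, Ub hΓ₀ k i * Ub hΓ₀ l i *
          (-2 * lamF hβ (ev hΓ₀ i) t * (1 + β * lamF hβ (ev hΓ₀ i) t)⁻¹) := by
    rw [covDrift_sol hβ hΓ₀ t, conj_entry]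
  rw [hval, funext hfun]
  exact HasDerivAt.fun_sum fun i _ =>
    (hasDerivAt_lamF hβ (ev hΓ₀ i) t).const_mul (Ub hΓ₀ k i * Ub hΓ₀ l i)

lemma sol_isCovSolution (hβ : 0 < β) (hΓ₀ : Γ₀.PosDef) :
    IsCovSolution β Γ₀ (sol hβ hΓ₀) :=
  ⟨sol_zero hβ hΓ₀, fun t _ i j => (sol_hasDerivAt_entry hβ hΓ₀ t i j).hasDerivWithinAt⟩

end Sol
section Uniq

variable {d : ℕ}

attribute [local instance] Matrix.linftyOpNormedAddCommGroup Matrix.linftyOpNormedSpace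
  Matrix.linftyOpNormedRing Matrix.linftyOpNormedAlgebra

local instance : CompleteSpace (Matrix (Fin d) (Fin d) ℝ) := FiniteDimensional.complete ℝ _

/-- Identity as a continuous linear equivalence between the matrix space (with the `L∞`
operator norm) and the plain pi type. -/
def eqvPi : Matrix (Fin d) (Fin d) ℝ ≃L[ℝ] (Fin d → Fin d → ℝ) :=
  LinearEquiv.toContinuousLinearEquiv
    { toFun := fun M => M
      invFun := fun M => M
      map_add' := fun _ _ => rfl
      map_smul' := fun _ _ => rfl
      left_inv := fun _ => rfl
      right_inv := fun _ => rfl }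

lemma hasDerivWithinAt_matrix {Γ : ℝ → Matrix (Fin d) (Fin d) ℝ}
    {M : Matrix (Fin d) (Fin d) ℝ} {s : Set ℝ} {t : ℝ}
    (h : ∀ i j, HasDerivWithinAt (fun u => Γ u i j) (M i j) s t) :
    HasDerivWithinAt Γ M s t := by
  have hpi : HasDerivWithinAt (fun u => (eqvPi (d := d)) (Γ u)) (eqvPi M) s t :=
    hasDerivWithinAt_pi.2 fun i => hasDerivWithinAt_pi.2 fun j => h i j
  have hcomp := ((eqvPi (d := d)).symm.toContinuousLinearMap.hasFDerivAt
    (x := eqvPi (Γ t))).comp_hasDerivWithinAt t hpi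
  exact hcomp

lemma solution_hasDeriv {β : ℝ} {Γ₀ : Matrix (Fin d) (Fin d) ℝ}
    {Γ : ℝ → Matrix (Fin d) (Fin d) ℝ} (h : IsCovSolution β Γ₀ Γ)
    {t : ℝ} (ht : t ∈ Ici (0:ℝ)) :
    HasDerivWithinAt Γ (covDrift β (Γ t)) (Ici (0:ℝ)) t :=
  hasDerivWithinAt_matrix (h.2 t ht)

lemma solution_continuousOn {β : ℝ} {Γ₀ : Matrix (Fin d) (Fin d) ℝ}
    {Γ : ℝ → Matrix (Fin d) (Fin d) ℝ} (h : IsCovSolution β Γ₀ Γ) :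
    ContinuousOn Γ (Ici (0:ℝ)) :=
  fun t ht => (solution_hasDeriv h ht).continuousWithinAt

lemma covDrift_lipschitz {β : ℝ} {A₀ : Matrix (Fin d) (Fin d) ℝ}
    (hu : IsUnit (1 + β • A₀)) :
    ∃ (K : NNReal) (ε : ℝ), 0 < ε ∧
      LipschitzOnWith K (covDrift β) (Metric.closedBall A₀ ε) := by
  have h1 : ContDiffAt ℝ 1 (fun A : Matrix (Fin d) (Fin d) ℝ => 1 + β • A) A₀ :=
    contDiffAt_const.add (contDiffAt_id.const_smul β)
  have h2 : ContDiffAt ℝ 1 (Ring.inverse : Matrix (Fin d) (Fin d) ℝ → _) (1 + β • A₀) := by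
    have := contDiffAt_ringInverse (𝕜 := ℝ) (n := 1) hu.unit
    rwa [hu.unit_spec] at this
  have h3 := h2.comp A₀ h1
  have h4 : ContDiffAt ℝ 1
      (fun A : Matrix (Fin d) (Fin d) ℝ => A * Ring.inverse (1 + β • A)) A₀ :=
    contDiffAt_id.mul h3
  have h5 := h4.const_smul (-2 : ℝ)
  have heq : covDrift (d := d) β
      = fun A => (-2:ℝ) • (A * Ring.inverse (1 + β • A)) :=
    funext fun A => by rw [covDrift, Matrix.nonsing_inv_eq_ringInverse]
  rw [← heq] at h5
  obtain ⟨K, s, hs, hK⟩ := h5.exists_lipschitzOnWith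
  obtain ⟨ε, hε, hball⟩ := Metric.mem_nhds_iff.1 hs
  refine ⟨K, ε / 2, by positivity, hK.mono ?_⟩
  exact (Metric.closedBall_subset_ball (by linarith)).trans hball

end Uniq

section Sol2

variable {β : ℝ} {Γ₀ : Matrix (Fin d) (Fin d) ℝ}

lemma sol_one_add_posDef (hβ : 0 < β) (hΓ₀ : Γ₀.PosDef) (t : ℝ) :
    (1 + β • sol hβ hΓ₀ t).PosDef := by
  rw [sol, one_add_smul_conj]
  exact conj_posDef hΓ₀ _ fun i => one_add_lam_pos hβ (lamF_pos hβ _ t)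

end Sol2

section Uniq2

variable {β : ℝ} {Γ₀ : Matrix (Fin d) (Fin d) ℝ}

attribute [local instance] Matrix.linftyOpNormedAddCommGroup Matrix.linftyOpNormedSpace
  Matrix.linftyOpNormedRing Matrix.linftyOpNormedAlgebra

lemma sol_unique (hβ : 0 < β) (hΓ₀ : Γ₀.PosDef) {Γ' : ℝ → Matrix (Fin d) (Fin d) ℝ}
    (hΓ' : IsCovSolution β Γ₀ Γ') {T : ℝ} (hT : 0 ≤ T) : Γ' T = sol hβ hΓ₀ T := by
  set Γ : ℝ → Matrix (Fin d) (Fin d) ℝ := sol hβ hΓ₀ with hΓdef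
  have hsol : IsCovSolution β Γ₀ Γ := sol_isCovSolution hβ hΓ₀
  set A : Set ℝ := {t | t ∈ Icc 0 T ∧ ∀ s ∈ Icc 0 t, Γ' s = Γ s} with hA
  have h0A : (0:ℝ) ∈ A := by
    refine ⟨⟨le_refl 0, hT⟩, fun s hs => ?_⟩
    have hs0 : s = 0 := le_antisymm hs.2 hs.1
    rw [hs0, hΓ'.1, hsol.1]
  have hbdd : BddAbove A := ⟨T, fun x hx => hx.1.2⟩
  have hAne : A.Nonempty := ⟨0, h0A⟩
  set m := sSup A with hm
  have hm0 : 0 ≤ m := le_csSup hbdd h0A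
  have hmT : m ≤ T := csSup_le hAne fun x hx => hx.1.2
  have hlt : ∀ s, 0 ≤ s → s < m → Γ' s = Γ s := by
    intro s hs0 hsm
    obtain ⟨x, hxA, hsx⟩ := exists_lt_of_lt_csSup hAne hsm
    exact hxA.2 s ⟨hs0, hsx.le⟩
  have hmEq : Γ' m = Γ m := by
    rcases eq_or_lt_of_le hm0 with h0 | h0
    · rw [← h0, hΓ'.1, hsol.1]
    · have hne : (𝓝[Ico 0 m] m).NeBot := by
        refine mem_closure_iff_nhdsWithin_neBot.1 ?_
        rw [closure_Ico h0.ne]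
        exact ⟨hm0, le_refl m⟩
      have hc1 : Tendsto Γ' (𝓝[Ico 0 m] m) (𝓝 (Γ' m)) :=
        ((solution_continuousOn hΓ' m hm0).mono Ico_subset_Ici_self)
      have hc2 : Tendsto Γ (𝓝[Ico 0 m] m) (𝓝 (Γ m)) :=
        ((solution_continuousOn hsol m hm0).mono Ico_subset_Ici_self)
      have heq : Γ' =ᶠ[𝓝[Ico 0 m] m] Γ :=
        eventually_nhdsWithin_of_forall fun s hs => hlt s hs.1 hs.2
      exact tendsto_nhds_unique (hc1.congr' heq) hc2
  have hEqOn : ∀ s ∈ Icc 0 m, Γ' s = Γ s := by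
    intro s hs
    rcases eq_or_lt_of_le hs.2 with h | h
    · rw [h]; exact hmEq
    · exact hlt s hs.1 h
  rcases eq_or_lt_of_le hmT with hmT' | hmT'
  · exact hEqOn T ⟨hT, le_of_eq hmT'.symm⟩
  exfalso
  have hupd : IsUnit (1 + β • Γ m) := (sol_one_add_posDef hβ hΓ₀ m).isUnit
  obtain ⟨K, ε, hε, hlip⟩ := covDrift_lipschitz hupd
  have hcw' : ContinuousWithinAt Γ' (Ici 0) m := solution_continuousOn hΓ' m hm0
  have hcw : ContinuousWithinAt Γ (Ici 0) m := solution_continuousOn hsol m hm0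
  have hball : Metric.closedBall (Γ m) ε ∈ 𝓝 (Γ m) := Metric.closedBall_mem_nhds _ hε
  have h1 : ∀ᶠ s in 𝓝[Ici 0] m, Γ' s ∈ Metric.closedBall (Γ m) ε := by
    have ht' : Tendsto Γ' (𝓝[Ici 0] m) (𝓝 (Γ m)) := hmEq ▸ hcw'
    exact ht'.eventually_mem hball
  have h2 : ∀ᶠ s in 𝓝[Ici 0] m, Γ s ∈ Metric.closedBall (Γ m) ε :=
    hcw.eventually_mem hball
  obtain ⟨δ, hδ, hδsub⟩ := Metric.mem_nhdsWithin_iff.1 (h1.and h2)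
  set b := min (m + δ / 2) T with hb
  have hmb : m < b := lt_min (by linarith) hmT'
  have hbT : b ≤ T := min_le_right _ _
  have hsub : Icc m b ⊆ Metric.ball m δ ∩ Ici 0 := by
    intro s hs
    constructor
    · rw [Metric.mem_ball, Real.dist_eq, abs_of_nonneg (by linarith [hs.1])]
      have : s ≤ m + δ / 2 := le_trans hs.2 (min_le_left _ _)
      linarith
    · exact le_trans hm0 hs.1
  have hmemB : ∀ s ∈ Icc m b,
      Γ' s ∈ Metric.closedBall (Γ m) ε ∧ Γ s ∈ Metric.closedBall (Γ m) ε :=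
    fun s hs => hδsub (hsub hs)
  have huni : EqOn Γ' Γ (Icc m b) := by
    refine ODE_solution_unique_of_mem_Icc_right
      (v := fun _ B => covDrift β B) (s := fun _ => Metric.closedBall (Γ m) ε)
      (K := K) (fun _ _ => hlip) ?_ ?_ ?_ ?_ ?_ ?_ hmEq
    · exact (solution_continuousOn hΓ').mono fun s hs => le_trans hm0 hs.1
    · intro t htm
      exact (solution_hasDeriv hΓ' (le_trans hm0 htm.1)).mono
        (fun x hx => le_trans (le_trans hm0 htm.1) hx)
    · exact fun t htm => (hmemB t ⟨htm.1, htm.2.le⟩).1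
    · exact (solution_continuousOn hsol).mono fun s hs => le_trans hm0 hs.1
    · intro t htm
      exact (solution_hasDeriv hsol (le_trans hm0 htm.1)).mono
        (fun x hx => le_trans (le_trans hm0 htm.1) hx)
    · exact fun t htm => (hmemB t ⟨htm.1, htm.2.le⟩).2
  have hbA : b ∈ A := by
    refine ⟨⟨le_trans hm0 hmb.le, hbT⟩, fun s hs => ?_⟩
    rcases le_or_gt s m with h | h
    · exact hEqOn s ⟨hs.1, h⟩
    · exact huni ⟨h.le, hs.2⟩
  have := le_csSup hbdd hbA
  exact absurd this (not_le.2 hmb)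

end Uniq2

end CovOdeAux

open CovOdeAux in
/-- For `β > 0` and `Γ₀` symmetric positive definite, the matrix ODE
`Γ̇ = −2Γ(I + βΓ)⁻¹`, `Γ(0) = Γ₀` has a unique global solution on `[0,∞)`; it stays
symmetric positive definite, preserves the eigenspaces of `Γ₀`, and each eigenvalue
satisfies `λ(t) + β⁻¹ log λ(t) = λ(0) + β⁻¹ log λ(0) − 2t/β`. -/
theorem covariance_ode_wellposed (β : ℝ) (hβ : 0 < β)
    (Γ₀ : Matrix (Fin d) (Fin d) ℝ) (hΓ₀ : Γ₀.PosDef) :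
    ∃ Γ : ℝ → Matrix (Fin d) (Fin d) ℝ,
      IsCovSolution β Γ₀ Γ ∧
      (∀ Γ' : ℝ → Matrix (Fin d) (Fin d) ℝ,
        IsCovSolution β Γ₀ Γ' → ∀ t ∈ Ici (0 : ℝ), Γ' t = Γ t) ∧
      (∀ t ∈ Ici (0 : ℝ), (Γ t).PosDef ∧ (Γ t).IsSymm) ∧
      (∀ (v : Fin d → ℝ) (lam0 : ℝ), v ≠ 0 → Γ₀ *ᵥ v = lam0 • v →
        ∃ lam : ℝ → ℝ, lam 0 = lam0 ∧
          ∀ t ∈ Ici (0 : ℝ), Γ t *ᵥ v = lam t • v ∧ 0 < lam t ∧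
            lam t + β⁻¹ * Real.log (lam t)
              = lam0 + β⁻¹ * Real.log lam0 - 2 * t / β) := by
  refine ⟨sol hβ hΓ₀, sol_isCovSolution hβ hΓ₀,
    fun Γ' hΓ' t ht => sol_unique hβ hΓ₀ hΓ' ht,
    fun t _ => ⟨sol_posDef hβ hΓ₀ t, sol_isSymm hβ hΓ₀ t⟩, ?_⟩
  intro v lam0 hv hev
  -- positivity of lam0
  have hvv : 0 < v ⬝ᵥ v := by
    rcases lt_or_eq_of_le (Finset.sum_nonneg fun i _ => mul_self_nonneg (v i)) with h | h
    · exact h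
    · exact absurd ((dotProduct_self_eq_zero).1 h.symm) hv
  have hlam0 : 0 < lam0 := by
    have h2 := hΓ₀.dotProduct_mulVec_pos hv
    rw [hev, star_trivial] at h2
    have h3 : v ⬝ᵥ (lam0 • v) = lam0 * (v ⬝ᵥ v) := by
      simp [dotProduct, Finset.mul_sum]
      exact Finset.sum_congr rfl fun i _ => by ring
    rw [h3] at h2
    by_contra hle
    push_neg at hle
    nlinarith
  -- eigenvector structure
  set w : Fin d → ℝ := star (Ub hΓ₀) *ᵥ v with hw
  have hUw : Ub hΓ₀ *ᵥ w = v := by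
    rw [hw, mulVec_mulVec, Ub_mul_star, one_mulVec]
  have hev' : conj hΓ₀ (ev hΓ₀) *ᵥ v = lam0 • v := by
    rw [← Γ₀_eq_conj hΓ₀]; exact hev
  have hDw : diagonal (ev hΓ₀) *ᵥ w = lam0 • w := by
    have h1 : star (Ub hΓ₀) *ᵥ (conj hΓ₀ (ev hΓ₀) *ᵥ v)
        = star (Ub hΓ₀) *ᵥ (lam0 • v) := by rw [hev']
    rw [mulVec_smul, Matrix.mulVec_mulVec] at h1
    have h2 : star (Ub hΓ₀) * conj hΓ₀ (ev hΓ₀)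
        = diagonal (ev hΓ₀) * star (Ub hΓ₀) := by
      unfold conj
      rw [← mul_assoc, ← mul_assoc, star_mul_Ub, one_mul]
    rw [h2, ← Matrix.mulVec_mulVec] at h1
    exact h1
  have hwi : ∀ i, ev hΓ₀ i * w i = lam0 * w i := by
    intro i
    have := congrFun hDw i
    simpa [mulVec_diagonal] using this
  refine ⟨lamF hβ lam0, lamF_zero hβ hlam0, fun t ht => ⟨?_, lamF_pos hβ lam0 t,
    lamF_eqn hβ lam0 t⟩⟩
  have hdiag : diagonal (fun i => lamF hβ (ev hΓ₀ i) t) *ᵥ w = lamF hβ lam0 t • w := by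
    funext i
    rw [mulVec_diagonal]
    rcases eq_or_ne (w i) 0 with h0 | h0
    · simp [h0]
    · have hevi : ev hΓ₀ i = lam0 := mul_right_cancel₀ h0 (hwi i)
      rw [hevi]
      rfl
  calc sol hβ hΓ₀ t *ᵥ v
      = Ub hΓ₀ *ᵥ (diagonal (fun i => lamF hβ (ev hΓ₀ i) t) *ᵥ w) := by
        rw [show sol hβ hΓ₀ t = conj hΓ₀ (fun i => lamF hβ (ev hΓ₀ i) t) from rfl,
          conj, ← Matrix.mulVec_mulVec, ← Matrix.mulVec_mulVec, hw]
    _ = Ub hΓ₀ *ᵥ (lamF hβ lam0 t • w) := by rw [hdiag]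
    _ = lamF hβ lam0 t • v := by rw [mulVec_smul, hUw]

end
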